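/- arXiv:2112.03464 — 2 statements merged into one kernel-verified Lean document; each statement's English description precedes it below -/
import Mathlib

section
/- Let n ≥ 1, K ≥ 1, κ ∈ (0,1], τ ∈ (0,1] and ρ ≥ τ. Let ω : ℝ → ℝⁿ and, for each k ∈ ℤⁿ with 0 < |k| ≤ K, let F̂(k,·) : ℝ → ℂ, all differentiable at a point w₀. Assume that for all k with 0 < |k| ≤ K one has |⟨k,ω(w₀)⟩| ≥ κ and |⟨k,ω'(w₀)⟩| ≤ |k|. Define Ŝ(k,w) = F̂(k,w)/(i⟨k,ω(w)⟩). Then Σ_{0<|k|≤K} (|Ŝ(k,w₀)| + |∂_w Ŝ(k,w₀)|) e^{(ρ−τ)|k|} ≤ (2/(τκ²)) Σ_{0<|k|≤K} (|F̂(k,w₀)| + |∂_w F̂(k,w₀)|) e^{ρ|k|}. -/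
open scoped BigOperators

lemma aux_bound (κ τ ρ m a b D d' : ℝ) (hκ0 : 0 < κ) (hκ1 : κ ≤ 1)
    (hτ0 : 0 < τ) (hτ1 : τ ≤ 1)
    (hm : 1 ≤ m) (hD : κ ≤ D) (hd' : |d'| ≤ m) (ha : 0 ≤ a) (hb : 0 ≤ b) :
    (a / D + (b * D + a * |d'|) / D ^ 2) * Real.exp ((ρ - τ) * m) ≤
      2 / (τ * κ ^ 2) * ((a + b) * Real.exp (ρ * m)) := by
  have hD0 : 0 < D := hκ0.trans_le hD
  have hE : Real.exp ((ρ - τ) * m) = Real.exp (ρ * m) * Real.exp (-(τ * m)) := by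
    rw [← Real.exp_add]; ring_nf
  set E := Real.exp (ρ * m) with hEdef
  set e := Real.exp (-(τ * m)) with hedef
  have hE0 : 0 < E := Real.exp_pos _
  have he0 : 0 < e := Real.exp_pos _
  have he1 : e ≤ 1 := Real.exp_le_one_iff.mpr (by nlinarith)
  have hme : m * e ≤ 1 / τ := by
    rw [hedef, Real.exp_neg, ← div_eq_mul_inv, div_le_div_iff₀ (Real.exp_pos _) hτ0]
    nlinarith [Real.add_one_le_exp (τ * m)]
  have hτκ : 0 < τ * κ ^ 2 := by positivity
  have hτκκ : τ * κ ^ 2 ≤ κ := by nlinarith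
  have step1 : a / D + (b * D + a * |d'|) / D ^ 2 ≤ (a + b) / κ + a * |d'| / κ ^ 2 := by
    have h1 : a / D ≤ a / κ := by gcongr
    have h2 : (b * D + a * |d'|) / D ^ 2 = b / D + a * |d'| / D ^ 2 := by
      field_simp
    have h3 : b / D ≤ b / κ := by gcongr
    have h4 : a * |d'| / D ^ 2 ≤ a * |d'| / κ ^ 2 := by
      gcongr <;> positivity
    rw [h2]
    have : a / κ + b / κ = (a + b) / κ := by ring
    linarith
  have hd0 : 0 ≤ |d'| := abs_nonneg _
  calc (a / D + (b * D + a * |d'|) / D ^ 2) * Real.exp ((ρ - τ) * m)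
      ≤ ((a + b) / κ + a * |d'| / κ ^ 2) * (E * e) := by
        rw [hE]; exact mul_le_mul_of_nonneg_right step1 (by positivity)
    _ = (a + b) / κ * (E * e) + a / κ ^ 2 * (|d'| * e * E) := by ring
    _ ≤ (a + b) / (τ * κ ^ 2) * E + (a + b) / (τ * κ ^ 2) * E := by
        have t1 : (a + b) / κ * (E * e) ≤ (a + b) / (τ * κ ^ 2) * E := by
          have : (a + b) / κ * (E * e) ≤ (a + b) / κ * E := by
            have h' : E * e ≤ E := by nlinarith
            exact mul_le_mul_of_nonneg_left h' (by positivity)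
          have h2 : (a + b) / κ * E ≤ (a + b) / (τ * κ ^ 2) * E := by
            gcongr <;> linarith
          linarith
        have t2 : a / κ ^ 2 * (|d'| * e * E) ≤ (a + b) / (τ * κ ^ 2) * E := by
          have hde : |d'| * e ≤ 1 / τ := by
            have : |d'| * e ≤ m * e := by gcongr
            linarith
          have : a / κ ^ 2 * (|d'| * e * E) ≤ a / κ ^ 2 * (1 / τ * E) := by
            have h' : |d'| * e * E ≤ 1 / τ * E := by
              exact mul_le_mul_of_nonneg_right hde (le_of_lt hE0)
            exact mul_le_mul_of_nonneg_left h' (by positivity)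
          have heq : a / κ ^ 2 * (1 / τ * E) = a / (τ * κ ^ 2) * E := by
            rw [div_mul_eq_mul_div, div_mul_eq_mul_div, mul_comm τ (κ ^ 2), ← div_div]; ring_nf
          have hab : a / (τ * κ ^ 2) * E ≤ (a + b) / (τ * κ ^ 2) * E := by
            gcongr; linarith
          linarith
        linarith
    _ = 2 / (τ * κ ^ 2) * ((a + b) * E) := by ring

/-- Quantitative solution of the truncated homological equation with parameter
derivatives: dividing by divisors `⟨k, ω(w)⟩` of size `≥ κ` whose `w`-derivative is
bounded by `|k|₁`, the weighted Fourier norm (with width shrunk from `ρ` to `ρ - τ`)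
of the solution and its `w`-derivative is bounded by `2/(τκ²)` times that of the data. -/
theorem stmt_4 (n : ℕ) (hn : 1 ≤ n) (K κ τ ρ : ℝ) (hK : 1 ≤ K)
    (hκ0 : 0 < κ) (hκ1 : κ ≤ 1) (hτ0 : 0 < τ) (hτ1 : τ ≤ 1) (hρ : τ ≤ ρ)
    (ω : ℝ → Fin n → ℝ) (w₀ : ℝ) (hω : DifferentiableAt ℝ ω w₀)
    (Fhat : (Fin n → ℤ) → ℝ → ℂ)
    (hFdiff : ∀ k : Fin n → ℤ, 0 < ∑ j, |(k j : ℝ)| → ∑ j, |(k j : ℝ)| ≤ K →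
      DifferentiableAt ℝ (Fhat k) w₀)
    (hdio : ∀ k : Fin n → ℤ, 0 < ∑ j, |(k j : ℝ)| → ∑ j, |(k j : ℝ)| ≤ K →
      κ ≤ |∑ j, (k j : ℝ) * ω w₀ j|)
    (hder : ∀ k : Fin n → ℤ, 0 < ∑ j, |(k j : ℝ)| → ∑ j, |(k j : ℝ)| ≤ K →
      |∑ j, (k j : ℝ) * deriv ω w₀ j| ≤ ∑ j, |(k j : ℝ)|)
    (Shat : (Fin n → ℤ) → ℝ → ℂ)
    (hShat : ∀ (k : Fin n → ℤ) (w : ℝ),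
      Shat k w = Fhat k w / (Complex.I * Complex.ofReal (∑ j, (k j : ℝ) * ω w j))) :
    ∑' k : Fin n → ℤ,
        (if 0 < ∑ j, |(k j : ℝ)| ∧ ∑ j, |(k j : ℝ)| ≤ K then
          (‖Shat k w₀‖ + ‖deriv (Shat k) w₀‖) *
            Real.exp ((ρ - τ) * ∑ j, |(k j : ℝ)|)
        else 0) ≤
      (2 / (τ * κ ^ 2)) *
        ∑' k : Fin n → ℤ,
          (if 0 < ∑ j, |(k j : ℝ)| ∧ ∑ j, |(k j : ℝ)| ≤ K then
            (‖Fhat k w₀‖ + ‖deriv (Fhat k) w₀‖) *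
              Real.exp (ρ * ∑ j, |(k j : ℝ)|)
          else 0) := by
  classical
  set M : ℤ := ⌈K⌉ with hM
  set s : Finset (Fin n → ℤ) := Finset.Icc (fun _ => -M) (fun _ => M) with hs
  have hmem : ∀ k : Fin n → ℤ, (∑ j, |(k j : ℝ)|) ≤ K → k ∈ s := by
    intro k hk
    have hj : ∀ j, |(k j : ℝ)| ≤ (M : ℝ) := by
      intro j
      refine le_trans ?_ (hk.trans (Int.le_ceil K))
      exact Finset.single_le_sum (f := fun j => |(k j : ℝ)|)
        (fun i _ => abs_nonneg _) (Finset.mem_univ j)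
    rw [hs, Finset.mem_Icc, Pi.le_def, Pi.le_def]
    refine ⟨fun j => ?_, fun j => ?_⟩
    · have := (abs_le.mp (hj j)).1
      exact_mod_cast this
    · have := (abs_le.mp (hj j)).2
      exact_mod_cast this
  -- rewrite tsums as finite sums
  have hzero : ∀ (f : (Fin n → ℤ) → ℝ),
      (∀ k, (¬ (0 < ∑ j, |(k j : ℝ)| ∧ ∑ j, |(k j : ℝ)| ≤ K)) → f k = 0) →
      (∀ k, k ∉ s → f k = 0) := by
    intro f hf k hk
    by_cases h : 0 < ∑ j, |(k j : ℝ)| ∧ ∑ j, |(k j : ℝ)| ≤ K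
    · exact absurd (hmem k h.2) hk
    · exact hf k h
  rw [tsum_eq_sum (s := s) (by
      intro k hk
      have : ¬ (0 < ∑ j, |(k j : ℝ)| ∧ ∑ j, |(k j : ℝ)| ≤ K) := by
        intro h; exact hk (hmem k h.2)
      simp [this]),
    tsum_eq_sum (s := s) (by
      intro k hk
      have : ¬ (0 < ∑ j, |(k j : ℝ)| ∧ ∑ j, |(k j : ℝ)| ≤ K) := by
        intro h; exact hk (hmem k h.2)
      simp [this]),
    Finset.mul_sum]
  refine Finset.sum_le_sum ?_
  intro k _
  by_cases h : 0 < ∑ j, |(k j : ℝ)| ∧ ∑ j, |(k j : ℝ)| ≤ K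
  · simp only [if_pos h]
    -- set up notation
    set m : ℝ := ∑ j, |(k j : ℝ)| with hm
    have hm1 : (1 : ℝ) ≤ m := by
      have hcast : m = ((∑ j, |k j| : ℤ) : ℝ) := by push_cast [hm]; rfl
      have h0 : (0 : ℤ) < ∑ j, |k j| := by
        have := h.1; rw [hcast] at this; exact_mod_cast this
      rw [hcast]; exact_mod_cast h0
    -- derivative of the divisor
    set g : ℝ → ℝ := fun w => ∑ j, (k j : ℝ) * ω w j with hg
    set d' : ℝ := ∑ j, (k j : ℝ) * deriv ω w₀ j with hd'
    have hgd : HasDerivAt g d' w₀ := by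
      rw [hg, hd']
      apply HasDerivAt.fun_sum
      intro j _
      have hj : HasDerivAt (fun w => ω w j) (deriv ω w₀ j) w₀ := by
        have := (ContinuousLinearMap.proj (R := ℝ) (φ := fun _ : Fin n => ℝ)
          j).hasFDerivAt.comp_hasDerivAt w₀ hω.hasDerivAt
        exact this
      exact hj.const_mul _
    have hgC : HasDerivAt (fun w => (g w : ℂ)) (d' : ℂ) w₀ :=
      Complex.ofRealCLM.hasFDerivAt.comp_hasDerivAt w₀ hgd
    have hden : HasDerivAt (fun w => Complex.I * (g w : ℂ)) (Complex.I * (d' : ℂ)) w₀ :=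
      hgC.const_mul _
    have hgκ : κ ≤ |g w₀| := hdio k h.1 h.2
    have hg0 : g w₀ ≠ 0 := by
      intro h0
      rw [h0, abs_zero] at hgκ; linarith
    have hne : Complex.I * (g w₀ : ℂ) ≠ 0 := by
      apply mul_ne_zero Complex.I_ne_zero
      exact_mod_cast hg0
    have hF : HasDerivAt (Fhat k) (deriv (Fhat k) w₀) w₀ :=
      (hFdiff k h.1 h.2).hasDerivAt
    have hSfun : Shat k = fun w => Fhat k w / (Complex.I * (g w : ℂ)) := by
      funext w; rw [hShat]
    have hS : HasDerivAt (Shat k)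
        ((deriv (Fhat k) w₀ * (Complex.I * (g w₀ : ℂ)) -
          Fhat k w₀ * (Complex.I * (d' : ℂ))) / (Complex.I * (g w₀ : ℂ)) ^ 2) w₀ := by
      rw [hSfun]
      exact hF.div hden hne
    set a : ℝ := ‖Fhat k w₀‖ with ha
    set b : ℝ := ‖deriv (Fhat k) w₀‖ with hb
    set D : ℝ := |g w₀| with hD
    have habsden : ‖Complex.I * (g w₀ : ℂ)‖ = D := by
      rw [norm_mul, Complex.norm_I, Complex.norm_real, Real.norm_eq_abs, one_mul]
    have hSval : ‖Shat k w₀‖ = a / D := by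
      rw [hShat, norm_div, habsden]
    have hSder : ‖deriv (Shat k) w₀‖ ≤ (b * D + a * |d'|) / D ^ 2 := by
      rw [hS.deriv, norm_div, norm_pow, habsden]
      gcongr
      calc ‖deriv (Fhat k) w₀ * (Complex.I * (g w₀ : ℂ)) -
              Fhat k w₀ * (Complex.I * (d' : ℂ))‖
          ≤ ‖deriv (Fhat k) w₀ * (Complex.I * (g w₀ : ℂ))‖ +
            ‖Fhat k w₀ * (Complex.I * (d' : ℂ))‖ := by
            simpa using norm_sub_le
              (deriv (Fhat k) w₀ * (Complex.I * (g w₀ : ℂ)))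
              (Fhat k w₀ * (Complex.I * (d' : ℂ)))
        _ = b * D + a * |d'| := by
            rw [norm_mul, habsden, norm_mul, norm_mul, Complex.norm_I,
              Complex.norm_real, Real.norm_eq_abs, one_mul]
    have hmder : |d'| ≤ m := hder k h.1 h.2
    have ha0 : 0 ≤ a := ha ▸ norm_nonneg _
    have hb0 : 0 ≤ b := hb ▸ norm_nonneg _
    have key := aux_bound κ τ ρ m a b D d' hκ0 hκ1 hτ0 hτ1 hm1 hgκ hmder ha0 hb0
    calc (‖Shat k w₀‖ + ‖deriv (Shat k) w₀‖) *
          Real.exp ((ρ - τ) * m)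
        ≤ (a / D + (b * D + a * |d'|) / D ^ 2) * Real.exp ((ρ - τ) * m) := by
          exact mul_le_mul_of_nonneg_right (add_le_add hSval.le hSder)
            (Real.exp_pos _).le
      _ ≤ 2 / (τ * κ ^ 2) * ((a + b) * Real.exp (ρ * m)) := key
  · simp [h]
end

section
/- Let d ≥ 1, p ≥ 0, γ ∈ (0,1], Δ ≥ 0 and C₀ ≥ 0. There exists a constant C = C(d,p) > 0 with the following property. Suppose M : ℤ^d × ℤ^d → ℂ satisfies M_{ab} = 0 whenever |a−b| ≤ Δ and |M_{ab}| ≤ C₀ e^{−γ|a−b|} whenever |a−b| > Δ, where |·| is the Euclidean norm. Then for every finitely supported z : ℤ^d → ℂ, (Σ_{a∈ℤ^d} ⟨a⟩^{2p} |Σ_{b∈ℤ^d} M_{ab} z_b|²)^{1/2} ≤ C C₀ γ^{−(d+p)} e^{−γΔ/2} (Σ_{b∈ℤ^d} ⟨b⟩^{2p} |z_b|²)^{1/2}, where ⟨a⟩ = max(|a|, 1). -/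
open scoped BigOperators ENNReal


-- H1: scalar inequality (1+s)^p ≤ (4n)^n * exp(s/4), n = max 1 ⌈p⌉₊
lemma aux_poly_exp (p : ℝ) (hp : 0 ≤ p) (s : ℝ) (hs : 0 ≤ s) :
    (1 + s) ^ p ≤ ((4 * (max 1 ⌈p⌉₊ : ℕ) : ℝ)) ^ (max 1 ⌈p⌉₊ : ℕ) * Real.exp (s / 4) := by
  set n : ℕ := max 1 ⌈p⌉₊ with hn
  have hn1 : 1 ≤ n := le_max_left _ _
  have hnR : (1 : ℝ) ≤ (n : ℝ) := by exact_mod_cast hn1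
  have h1s : (1 : ℝ) ≤ 1 + s := by linarith
  have hpn : p ≤ (n : ℝ) := by
    calc p ≤ (⌈p⌉₊ : ℝ) := Nat.le_ceil p
    _ ≤ (n : ℝ) := by exact_mod_cast le_max_right 1 ⌈p⌉₊
  have step1 : (1 + s) ^ p ≤ (1 + s) ^ (n : ℝ) :=
    Real.rpow_le_rpow_of_exponent_le h1s hpn
  have step2 : (1 + s) ^ (n : ℝ) = (1 + s) ^ n := Real.rpow_natCast _ n
  have key : 1 + s ≤ 4 * (n : ℝ) * Real.exp (s / (4 * n)) := by
    have h4n : (0 : ℝ) < 4 * n := by linarith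
    have := Real.add_one_le_exp (s / (4 * n))
    calc 1 + s ≤ 4 * (n : ℝ) + s := by linarith
    _ = 4 * (n : ℝ) * (s / (4 * n) + 1) := by field_simp; ring
    _ ≤ 4 * (n : ℝ) * Real.exp (s / (4 * n)) := by
        apply mul_le_mul_of_nonneg_left this (le_of_lt h4n)
  have step3 : (1 + s) ^ n ≤ (4 * (n : ℝ) * Real.exp (s / (4 * n))) ^ n :=
    pow_le_pow_left₀ (by linarith) key n
  have step4 : (4 * (n : ℝ) * Real.exp (s / (4 * n))) ^ n
      = (4 * (n : ℝ)) ^ n * Real.exp (s / 4) := by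
    rw [mul_pow, ← Real.exp_nat_mul]
    congr 1
    field_simp
  calc (1 + s) ^ p ≤ (1 + s) ^ (n:ℝ) := step1
  _ = (1 + s) ^ n := step2
  _ ≤ _ := step3
  _ = _ := step4


-- H2: one-dimensional exponential sum over ℤ
lemma aux_onedim (s : ℝ) (hs0 : 0 < s) (hs1 : s ≤ 1) :
    ∑' n : ℤ, ENNReal.ofReal (Real.exp (-s * |(n : ℝ)|)) ≤ ENNReal.ofReal (6 / s) := by
  set r : ℝ := Real.exp (-s) with hr
  have hr0 : 0 < r := Real.exp_pos _
  have hr1 : r < 1 := Real.exp_lt_one_iff.mpr (by linarith)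
  have hval : ∀ n : ℤ, Real.exp (-s * |(n : ℝ)|) = r ^ n.natAbs := by
    intro n
    rw [hr, ← Real.exp_nat_mul]
    congr 1
    rw [Nat.cast_natAbs]
    push_cast
    ring
  have hsum_nat : Summable (fun k : ℕ => r ^ k) := summable_geometric_of_lt_one hr0.le hr1
  have hgeo : ∑' k : ℕ, r ^ k = (1 - r)⁻¹ := tsum_geometric_of_lt_one hr0.le hr1
  have hneg : (fun k : ℕ => r ^ (-((k:ℤ)+1)).natAbs) = fun k : ℕ => r ^ (k+1) := by
    funext k; congr 1
  have hsumneg : Summable (fun k : ℕ => r ^ (-((k:ℤ)+1)).natAbs) := by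
    rw [hneg]; exact (summable_nat_add_iff 1).mpr hsum_nat
  have hsummable : Summable (fun n : ℤ => r ^ n.natAbs) :=
    Summable.of_nat_of_neg_add_one (by simpa using hsum_nat) hsumneg
  have htsum : ∑' n : ℤ, r ^ n.natAbs ≤ 6 / s := by
    have hsplit := tsum_of_nat_of_neg_add_one
      (f := fun n : ℤ => r ^ n.natAbs) (by simpa using hsum_nat) hsumneg
    have h1 : (∑' k : ℕ, r ^ ((k : ℤ)).natAbs) = (1 - r)⁻¹ := by simpa using hgeo
    have h2 : (∑' k : ℕ, r ^ ((-((k:ℤ)+1) : ℤ)).natAbs) ≤ (1 - r)⁻¹ := by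
      rw [hneg]
      calc ∑' k : ℕ, r ^ (k+1) ≤ ∑' k : ℕ, r ^ k :=
            Summable.tsum_le_tsum (fun k => pow_le_pow_of_le_one hr0.le hr1.le (by omega))
              ((summable_nat_add_iff 1).mpr hsum_nat) hsum_nat
      _ = (1 - r)⁻¹ := hgeo
    have hone : s / 3 ≤ 1 - r := by
      have hinv : r ≤ 1 / (1 + s) := by
        rw [hr, Real.exp_neg, div_eq_inv_mul, mul_one]
        apply inv_anti₀ (by linarith)
        linarith [Real.add_one_le_exp s]
      have h3 : 1 / (1 + s) ≤ 1 - s / 3 := by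
        rw [div_le_iff₀ (by linarith)]
        nlinarith
      linarith
    have hpos : (0:ℝ) < 1 - r := by linarith
    have hinv3 : (1 - r)⁻¹ ≤ 3 / s := by
      have := inv_anti₀ (by positivity : (0:ℝ) < s / 3) hone
      rwa [inv_div] at this
    calc ∑' n : ℤ, r ^ n.natAbs
        = (∑' k : ℕ, r ^ ((k : ℤ)).natAbs) + ∑' k : ℕ, r ^ ((-((k:ℤ)+1) : ℤ)).natAbs := hsplit
    _ ≤ (1 - r)⁻¹ + (1 - r)⁻¹ := by rw [h1]; exact add_le_add le_rfl h2
    _ ≤ 3 / s + 3 / s := by linarith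
    _ = 6 / s := by ring
  calc ∑' n : ℤ, ENNReal.ofReal (Real.exp (-s * |(n : ℝ)|))
      = ∑' n : ℤ, ENNReal.ofReal (r ^ n.natAbs) := by
        congr 1; funext n; rw [hval]
  _ = ENNReal.ofReal (∑' n : ℤ, r ^ n.natAbs) :=
      (ENNReal.ofReal_tsum_of_nonneg (fun n => by positivity) hsummable).symm
  _ ≤ ENNReal.ofReal (6 / s) := ENNReal.ofReal_le_ofReal htsum


-- H3: tsum of products over pi types in ℝ≥0∞
lemma aux_pi_tsum (d : ℕ) (g : ℤ → ℝ≥0∞) :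
    ∑' a : Fin d → ℤ, ∏ j, g (a j) = (∑' n : ℤ, g n) ^ d := by
  induction d with
  | zero =>
    simp only [Finset.univ_eq_empty, Finset.prod_empty, pow_zero]
    exact tsum_eq_single (fun i => i.elim0) (fun b hb => absurd (funext fun i => i.elim0) hb) |>.trans rfl
  | succ d ih =>
    have he := (Fin.consEquiv (fun _ : Fin (d+1) => ℤ)).tsum_eq (fun a : Fin (d+1) → ℤ => ∏ j, g (a j))
    rw [← he]
    have hcomp : ∀ q : ℤ × (Fin d → ℤ),
        (∏ j, g ((Fin.consEquiv (fun _ : Fin (d+1) => ℤ)) q j)) = g q.1 * ∏ j, g (q.2 j) := by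
      intro q
      rw [Fin.prod_univ_succ]
      simp [Fin.consEquiv]
    calc ∑' q : ℤ × (Fin d → ℤ), ∏ j, g ((Fin.consEquiv (fun _ : Fin (d+1) => ℤ)) q j)
        = ∑' q : ℤ × (Fin d → ℤ), g q.1 * ∏ j, g (q.2 j) := by
          congr 1; funext q; exact hcomp q
    _ = ∑' n : ℤ, ∑' t : Fin d → ℤ, g n * ∏ j, g (t j) := ENNReal.tsum_prod (f := fun (n : ℤ) (t : Fin d → ℤ) => g n * ∏ j, g (t j))
    _ = ∑' n : ℤ, g n * ∑' t : Fin d → ℤ, ∏ j, g (t j) := by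
          congr 1; funext n; exact ENNReal.tsum_mul_left
    _ = (∑' n : ℤ, g n) * ∑' t : Fin d → ℤ, ∏ j, g (t j) := ENNReal.tsum_mul_right
    _ = (∑' n : ℤ, g n) ^ (d + 1) := by rw [ih]; ring



-- notation: the embedding into Euclidean space
noncomputable def emb (d : ℕ) (a : Fin d → ℤ) : EuclideanSpace ℝ (Fin d) := WithLp.toLp 2 (fun j => (a j : ℝ))

lemma emb_norm (d : ℕ) (a : Fin d → ℤ) :
    Real.sqrt (∑ j, ((a j : ℝ)) ^ 2) = ‖emb d a‖ := by
  rw [EuclideanSpace.norm_eq]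
  congr 1
  refine Finset.sum_congr rfl fun j _ => ?_
  rw [emb, PiLp.toLp_apply, Real.norm_eq_abs, sq_abs]

lemma emb_norm_sub (d : ℕ) (a b : Fin d → ℤ) :
    Real.sqrt (∑ j, ((a j : ℝ) - (b j : ℝ)) ^ 2) = ‖emb d a - emb d b‖ := by
  rw [EuclideanSpace.norm_eq]
  congr 1
  refine Finset.sum_congr rfl fun j _ => ?_
  have : (emb d a - emb d b) j = (a j : ℝ) - (b j : ℝ) := by simp [emb]
  rw [this, Real.norm_eq_abs, sq_abs]

lemma emb_l1 (d : ℕ) (a : Fin d → ℤ) :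
    (∑ j, |(a j : ℝ)|) ≤ d * ‖emb d a‖ := by
  have h : ∀ j : Fin d, |(a j : ℝ)| ≤ ‖emb d a‖ := by
    intro j
    have := EuclideanSpace.norm_eq (emb d a)
    rw [this]
    have h1 : |(a j : ℝ)| = Real.sqrt (((a j : ℝ)) ^ 2) := (Real.sqrt_sq_eq_abs _).symm
    rw [h1]
    apply Real.sqrt_le_sqrt
    have : ((a j : ℝ)) ^ 2 = ‖emb d a j‖ ^ 2 := by rw [emb, PiLp.toLp_apply, Real.norm_eq_abs, sq_abs]
    rw [this]
    exact Finset.single_le_sum (f := fun j => ‖emb d a j‖ ^ 2) (fun i _ => by positivity)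
      (Finset.mem_univ j)
  calc (∑ j, |(a j : ℝ)|) ≤ ∑ _j : Fin d, ‖emb d a‖ := Finset.sum_le_sum fun j _ => h j
  _ = d * ‖emb d a‖ := by rw [Finset.sum_const, Finset.card_univ, Fintype.card_fin,
        nsmul_eq_mul]

-- H4: d-dimensional sum bound
lemma aux_ddim (d : ℕ) (hd : 1 ≤ d) (γ : ℝ) (hγ : 0 < γ) (hγ1 : γ ≤ 1) (c : Fin d → ℤ) :
    ∑' a : Fin d → ℤ, ENNReal.ofReal (Real.exp (-(γ/4) * ‖emb d a - emb d c‖)) ≤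
      ENNReal.ofReal (((24 * d : ℝ) / γ) ^ d) := by
  have hdR : (1:ℝ) ≤ d := by exact_mod_cast hd
  set s : ℝ := γ / (4 * d) with hs
  have hs0 : 0 < s := by positivity
  have hs1 : s ≤ 1 := by
    rw [hs, div_le_one (by positivity)]
    nlinarith
  -- shift
  have hshift := (Equiv.addRight c).tsum_eq
      (fun a : Fin d → ℤ => ENNReal.ofReal (Real.exp (-(γ/4) * ‖emb d a - emb d c‖)))
  rw [← hshift]
  have hsub : ∀ a : Fin d → ℤ, emb d ((Equiv.addRight c) a) - emb d c = emb d a := by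
    intro a; ext j
    simp [emb, Equiv.addRight]
  -- pointwise bound by products
  have hpt : ∀ a : Fin d → ℤ,
      ENNReal.ofReal (Real.exp (-(γ/4) * ‖emb d a‖)) ≤
        ∏ j, ENNReal.ofReal (Real.exp (-s * |((a j : ℤ) : ℝ)|)) := by
    intro a
    have h1 : Real.exp (-(γ/4) * ‖emb d a‖) ≤ Real.exp (-s * ∑ j, |((a j : ℤ) : ℝ)|) := by
      apply Real.exp_le_exp.mpr
      have := emb_l1 d a
      have hnn : 0 ≤ ‖emb d a‖ := norm_nonneg _
      rw [hs]
      rw [neg_mul, neg_mul, neg_le_neg_iff]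
      rw [div_mul_eq_mul_div, div_le_iff₀ (by positivity)]
      calc γ * ∑ j, |((a j : ℤ) : ℝ)| ≤ γ * (d * ‖emb d a‖) := by
            apply mul_le_mul_of_nonneg_left this hγ.le
      _ = γ / 4 * ‖emb d a‖ * (4 * d) := by ring
    have h2 : Real.exp (-s * ∑ j, |((a j : ℤ) : ℝ)|) =
        ∏ j, Real.exp (-s * |((a j : ℤ) : ℝ)|) := by
      rw [← Real.exp_sum]
      congr 1
      rw [Finset.mul_sum]  -- -s * ∑ = ∑ -s *
    calc ENNReal.ofReal (Real.exp (-(γ/4) * ‖emb d a‖))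
        ≤ ENNReal.ofReal (∏ j, Real.exp (-s * |((a j : ℤ) : ℝ)|)) := by
          rw [← h2]; exact ENNReal.ofReal_le_ofReal h1
    _ = ∏ j, ENNReal.ofReal (Real.exp (-s * |((a j : ℤ) : ℝ)|)) := by
          rw [← ENNReal.ofReal_prod_of_nonneg]
          intro j _; positivity
  calc ∑' a : Fin d → ℤ, ENNReal.ofReal (Real.exp (-(γ/4) * ‖emb d ((Equiv.addRight c) a) - emb d c‖))
      = ∑' a : Fin d → ℤ, ENNReal.ofReal (Real.exp (-(γ/4) * ‖emb d a‖)) := by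
        congr 1; funext a; rw [hsub]
  _ ≤ ∑' a : Fin d → ℤ, ∏ j, ENNReal.ofReal (Real.exp (-s * |((a j : ℤ) : ℝ)|)) :=
        ENNReal.tsum_le_tsum hpt
  _ = (∑' n : ℤ, ENNReal.ofReal (Real.exp (-s * |(n : ℝ)|))) ^ d :=
        aux_pi_tsum d (fun n : ℤ => ENNReal.ofReal (Real.exp (-s * |(n:ℝ)|)))
  _ ≤ (ENNReal.ofReal (6 / s)) ^ d := by
        exact pow_le_pow_left' (aux_onedim s hs0 hs1) d
  _ = ENNReal.ofReal ((6 / s) ^ d) := by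
        rw [← ENNReal.ofReal_pow (by positivity)]
  _ = ENNReal.ofReal (((24 * d : ℝ) / γ) ^ d) := by
        congr 1
        rw [hs]
        congr 1
        field_simp
        ring


lemma aux_cs {ι : Type*} (S : Finset ι) (K y : ι → ℝ) (hK : ∀ b ∈ S, 0 ≤ K b) :
    (∑ b ∈ S, K b * y b) ^ 2 ≤ (∑ b ∈ S, K b) * (∑ b ∈ S, K b * (y b) ^ 2) := by
  have h := Finset.sum_mul_sq_le_sq_mul_sq S (fun b => Real.sqrt (K b))
    (fun b => Real.sqrt (K b) * y b)
  have e1 : ∀ b ∈ S, Real.sqrt (K b) * (Real.sqrt (K b) * y b) = K b * y b := by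
    intro b hb; rw [← mul_assoc, Real.mul_self_sqrt (hK b hb)]
  have e2 : ∀ b ∈ S, Real.sqrt (K b) ^ 2 = K b := fun b hb => Real.sq_sqrt (hK b hb)
  have e3 : ∀ b ∈ S, (Real.sqrt (K b) * y b) ^ 2 = K b * (y b) ^ 2 := by
    intro b hb; rw [mul_pow, Real.sq_sqrt (hK b hb)]
  rw [Finset.sum_congr rfl e1, Finset.sum_congr rfl e2, Finset.sum_congr rfl e3] at h
  exact h

lemma aux_kernel (n : ℕ) (p γ Δ C₀ : ℝ) (hp : 0 ≤ p) (hn : n = max 1 ⌈p⌉₊)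
    (hγ : 0 < γ) (hγ1 : γ ≤ 1) (hΔ : 0 ≤ Δ) (hC₀ : 0 ≤ C₀)
    (ma mb t μ : ℝ) (hma1 : 1 ≤ ma) (hmb1 : 1 ≤ mb) (hmat : ma ≤ mb + t) (ht : Δ < t)
    (hμ0 : 0 ≤ μ) (hμ : μ ≤ C₀ * Real.exp (-γ * t)) :
    ma ^ p / mb ^ p * μ ≤
      (4 * (n:ℝ)) ^ n * γ ^ (-p) * C₀ * Real.exp (-γ * Δ / 2) * Real.exp (-(γ/4) * t) := by
  have ht0 : 0 ≤ t := le_trans hΔ ht.le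
  have hma0 : 0 < ma := by linarith
  have hmb0 : 0 < mb := by linarith
  have h1 : ma ≤ (1 + t) * mb := by nlinarith
  have hdiv : ma ^ p / mb ^ p ≤ (1 + t) ^ p := by
    rw [div_le_iff₀ (Real.rpow_pos_of_pos hmb0 p)]
    calc ma ^ p ≤ ((1+t) * mb) ^ p := Real.rpow_le_rpow hma0.le h1 hp
    _ = (1+t) ^ p * mb ^ p := Real.mul_rpow (by linarith) hmb0.le
  have h2 : (1 + t) ^ p ≤ γ ^ (-p) * (1 + γ * t) ^ p := by
    have hg1 : γ * (1 + t) ≤ 1 + γ * t := by nlinarith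
    have hgt : 1 + t ≤ γ⁻¹ * (1 + γ * t) := by
      calc 1 + t = γ⁻¹ * (γ * (1 + t)) := by field_simp
      _ ≤ γ⁻¹ * (1 + γ * t) := by
          apply mul_le_mul_of_nonneg_left hg1 (by positivity)
    calc (1+t) ^ p ≤ (γ⁻¹ * (1 + γ*t)) ^ p := Real.rpow_le_rpow (by linarith) hgt hp
    _ = (γ⁻¹) ^ p * (1+γ*t) ^ p := Real.mul_rpow (by positivity) (by nlinarith)
    _ = γ ^ (-p) * (1+γ*t) ^ p := by rw [Real.inv_rpow hγ.le, ← Real.rpow_neg hγ.le]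
  have h3 : (1 + γ*t) ^ p ≤ (4*(n:ℝ)) ^ n * Real.exp (γ*t/4) := by
    have h := aux_poly_exp p hp (γ*t) (by positivity)
    rw [hn]
    exact h
  have hexp : Real.exp (γ*t/4) * Real.exp (-γ*t) = Real.exp (-γ*t/2) * Real.exp (-(γ/4)*t) := by
    rw [← Real.exp_add, ← Real.exp_add]; congr 1; ring
  have hexp2 : Real.exp (-γ*t/2) ≤ Real.exp (-γ*Δ/2) := by
    apply Real.exp_le_exp.mpr; nlinarith
  have hd0 : 0 ≤ ma ^ p / mb ^ p := by positivity
  calc ma^p/mb^p * μ ≤ (1+t)^p * (C₀ * Real.exp (-γ*t)) :=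
        mul_le_mul hdiv hμ hμ0 (by positivity)
  _ ≤ (γ^(-p) * ((4*(n:ℝ))^n * Real.exp (γ*t/4))) * (C₀ * Real.exp (-γ*t)) := by
        apply mul_le_mul_of_nonneg_right _ (by positivity)
        calc (1+t)^p ≤ γ^(-p) * (1+γ*t)^p := h2
        _ ≤ γ^(-p) * ((4*(n:ℝ))^n * Real.exp (γ*t/4)) :=
            mul_le_mul_of_nonneg_left h3 (by positivity)
  _ = (4*(n:ℝ))^n * γ^(-p) * C₀ * (Real.exp (γ*t/4) * Real.exp (-γ*t)) := by ring
  _ = (4*(n:ℝ))^n * γ^(-p) * C₀ * (Real.exp (-γ*t/2) * Real.exp (-(γ/4)*t)) := by rw [hexp]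
  _ ≤ (4*(n:ℝ))^n * γ^(-p) * C₀ * (Real.exp (-γ*Δ/2) * Real.exp (-(γ/4)*t)) := by
        apply mul_le_mul_of_nonneg_left
          (mul_le_mul_of_nonneg_right hexp2 (by positivity)) (by positivity)
  _ = _ := by ring

/-- Schur-test / Young-type estimate on the weighted space `ℓ²_p(ℤ^d)`: a matrix with
exponentially decaying entries vanishing on the band `|a-b| ≤ Δ` defines an operator on
`ℓ²_p` whose norm carries the factor `C₀ γ^{-(d+p)} e^{-γΔ/2}`. -/
theorem stmt_9 (d : ℕ) (hd : 1 ≤ d) (p : ℝ) (hp : 0 ≤ p) :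
    ∃ C : ℝ, 0 < C ∧
      ∀ γ Δ C₀ : ℝ, 0 < γ → γ ≤ 1 → 0 ≤ Δ → 0 ≤ C₀ →
      ∀ M : (Fin d → ℤ) → (Fin d → ℤ) → ℂ,
        (∀ a b : Fin d → ℤ,
          Real.sqrt (∑ j, ((a j : ℝ) - (b j : ℝ)) ^ 2) ≤ Δ → M a b = 0) →
        (∀ a b : Fin d → ℤ,
          Δ < Real.sqrt (∑ j, ((a j : ℝ) - (b j : ℝ)) ^ 2) →
          ‖M a b‖ ≤
            C₀ * Real.exp (-γ * Real.sqrt (∑ j, ((a j : ℝ) - (b j : ℝ)) ^ 2))) →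
        ∀ z : (Fin d → ℤ) → ℂ, (Function.support z).Finite →
          Real.sqrt (∑' a : Fin d → ℤ,
              (max (Real.sqrt (∑ j, (a j : ℝ) ^ 2)) 1) ^ (2 * p) *
                ‖∑' b : Fin d → ℤ, M a b * z b‖ ^ 2) ≤
            C * C₀ * γ ^ (-((d : ℝ) + p)) * Real.exp (-γ * Δ / 2) *
              Real.sqrt (∑' b : Fin d → ℤ,
                (max (Real.sqrt (∑ j, (b j : ℝ) ^ 2)) 1) ^ (2 * p) *
                  ‖z b‖ ^ 2) := by
  classical
  set n : ℕ := max 1 ⌈p⌉₊ with hn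
  have hn1 : 1 ≤ n := le_max_left _ _
  have hdR : (1:ℝ) ≤ (d:ℝ) := by exact_mod_cast hd
  have hnR : (1:ℝ) ≤ (n:ℝ) := by exact_mod_cast hn1
  refine ⟨(4*(n:ℝ))^n * (24*(d:ℝ))^d,
    mul_pos (pow_pos (by linarith) n) (pow_pos (by linarith) d), ?_⟩
  intro γ Δ C₀ hγ hγ1 hΔ hC₀ M hband hdecay z hz
  simp only [emb_norm, emb_norm_sub] at hband hdecay ⊢
  -- finite support
  set S : Finset (Fin d → ℤ) := hz.toFinset with hS
  have hzS : ∀ b, b ∉ S → z b = 0 := by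
    intro b hb
    by_contra hzb
    exact hb (by rw [hS, Set.Finite.mem_toFinset]; exact hzb)
  have hF : ∀ a : Fin d → ℤ, (∑' b, M a b * z b) = ∑ b ∈ S, M a b * z b := fun a =>
    tsum_eq_sum (fun b hb => by rw [hzS b hb, mul_zero])
  simp only [hF]
  -- weights
  have hm1 : ∀ a : Fin d → ℤ, (1:ℝ) ≤ max ‖emb d a‖ 1 := fun a => le_max_right _ _
  have hmpos : ∀ a : Fin d → ℤ, (0:ℝ) < max ‖emb d a‖ 1 :=
    fun a => lt_of_lt_of_le one_pos (hm1 a)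
  have hsq : ∀ a : Fin d → ℤ,
      (max ‖emb d a‖ 1) ^ (2*p) = ((max ‖emb d a‖ 1) ^ p) ^ (2:ℕ) := by
    intro a
    rw [← Real.rpow_natCast ((max ‖emb d a‖ 1) ^ p) 2,
      ← Real.rpow_mul (hmpos a).le]
    norm_num
    rw [mul_comm]
  -- kernel
  set K : (Fin d → ℤ) → (Fin d → ℤ) → ℝ := fun a b =>
    (max ‖emb d a‖ 1) ^ p / (max ‖emb d b‖ 1) ^ p * ‖M a b‖ with hKdef
  have hK0 : ∀ a b, 0 ≤ K a b := by
    intro a b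
    apply mul_nonneg _ (norm_nonneg _)
    positivity
  set B₁ : ℝ := (4*(n:ℝ))^n * γ^(-p) * C₀ * Real.exp (-γ*Δ/2) with hB₁def
  have hB₁0 : 0 ≤ B₁ := by positivity
  have hKb : ∀ a b, K a b ≤ B₁ * Real.exp (-(γ/4) * ‖emb d a - emb d b‖) := by
    intro a b
    rcases le_or_gt ‖emb d a - emb d b‖ Δ with h | h
    · have hM0 : M a b = 0 := hband a b h
      rw [hKdef]
      simp only [hM0, norm_zero, mul_zero]
      positivity
    · have hma : max ‖emb d a‖ 1 ≤ max ‖emb d b‖ 1 + ‖emb d a - emb d b‖ := by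
        have htr : ‖emb d a‖ - ‖emb d b‖ ≤ ‖emb d a - emb d b‖ :=
          norm_sub_norm_le _ _
        have h0 : 0 ≤ ‖emb d a - emb d b‖ := norm_nonneg _
        apply max_le
        · have : ‖emb d a‖ ≤ ‖emb d b‖ + ‖emb d a - emb d b‖ := by linarith
          exact le_trans this (by gcongr; exact le_max_left _ _)
        · linarith [hm1 b]
      exact aux_kernel n p γ Δ C₀ hp hn hγ hγ1 hΔ hC₀ _ _ _ _
        (hm1 a) (hm1 b) hma h (norm_nonneg _) (hdecay a b h)
  -- the global constant
  set B : ℝ := (4*(n:ℝ))^n * (24*(d:ℝ))^d * C₀ * γ ^ (-((d:ℝ) + p)) * Real.exp (-γ * Δ / 2)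
    with hBdef
  have hB0 : 0 ≤ B := by positivity
  have hBB : B₁ * ((24 * (d:ℝ)) / γ) ^ d = B := by
    rw [hB₁def, hBdef]
    have hγd : γ ^ (-((d:ℝ) + p)) = (γ ^ d)⁻¹ * γ ^ (-p) := by
      rw [show -((d:ℝ)+p) = (-(d:ℝ)) + (-p) by ring, Real.rpow_add hγ,
        Real.rpow_neg hγ.le, Real.rpow_natCast]
    rw [hγd, div_pow]
    have hγdne : (γ:ℝ) ^ d ≠ 0 := by positivity
    field_simp
  -- row and column bounds in ℝ≥0∞
  have hrow : ∀ a, ∑' b : Fin d → ℤ, ENNReal.ofReal (K a b) ≤ ENNReal.ofReal B := by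
    intro a
    calc ∑' b : Fin d → ℤ, ENNReal.ofReal (K a b)
        ≤ ∑' b : Fin d → ℤ,
            ENNReal.ofReal B₁ * ENNReal.ofReal (Real.exp (-(γ/4) * ‖emb d b - emb d a‖)) := by
          apply ENNReal.tsum_le_tsum
          intro b
          rw [← ENNReal.ofReal_mul hB₁0]
          apply ENNReal.ofReal_le_ofReal
          rw [norm_sub_rev]
          exact hKb a b
    _ = ENNReal.ofReal B₁ *
          ∑' b : Fin d → ℤ, ENNReal.ofReal (Real.exp (-(γ/4) * ‖emb d b - emb d a‖)) :=
        ENNReal.tsum_mul_left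
    _ ≤ ENNReal.ofReal B₁ * ENNReal.ofReal (((24 * (d:ℝ)) / γ) ^ d) :=
        mul_le_mul_right (aux_ddim d hd γ hγ hγ1 a) _
    _ = ENNReal.ofReal B := by rw [← ENNReal.ofReal_mul hB₁0, hBB]
  have hcol : ∀ b, ∑' a : Fin d → ℤ, ENNReal.ofReal (K a b) ≤ ENNReal.ofReal B := by
    intro b
    calc ∑' a : Fin d → ℤ, ENNReal.ofReal (K a b)
        ≤ ∑' a : Fin d → ℤ,
            ENNReal.ofReal B₁ * ENNReal.ofReal (Real.exp (-(γ/4) * ‖emb d a - emb d b‖)) := by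
          apply ENNReal.tsum_le_tsum
          intro a
          rw [← ENNReal.ofReal_mul hB₁0]
          exact ENNReal.ofReal_le_ofReal (hKb a b)
    _ = ENNReal.ofReal B₁ *
          ∑' a : Fin d → ℤ, ENNReal.ofReal (Real.exp (-(γ/4) * ‖emb d a - emb d b‖)) :=
        ENNReal.tsum_mul_left
    _ ≤ ENNReal.ofReal B₁ * ENNReal.ofReal (((24 * (d:ℝ)) / γ) ^ d) :=
        mul_le_mul_right (aux_ddim d hd γ hγ hγ1 b) _
    _ = ENNReal.ofReal B := by rw [← ENNReal.ofReal_mul hB₁0, hBB]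
  -- RHS sum is a finite sum
  have hT2rw : (∑' b : Fin d → ℤ, (max ‖emb d b‖ 1) ^ (2*p) * ‖z b‖ ^ 2)
      = ∑ b ∈ S, (max ‖emb d b‖ 1) ^ (2*p) * ‖z b‖ ^ 2 :=
    tsum_eq_sum (fun b hb => by rw [hzS b hb]; simp)
  set T₂ : ℝ := ∑ b ∈ S, (max ‖emb d b‖ 1) ^ (2*p) * ‖z b‖ ^ 2 with hT₂def
  have hT₂0 : 0 ≤ T₂ := Finset.sum_nonneg fun b _ => by positivity
  set y : (Fin d → ℤ) → ℝ := fun b => (max ‖emb d b‖ 1) ^ p * ‖z b‖ with hydef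
  have hy2 : ∀ b, (y b) ^ 2 = (max ‖emb d b‖ 1) ^ (2*p) * ‖z b‖ ^ 2 := by
    intro b
    rw [hydef]
    simp only []
    rw [mul_pow, hsq b]
  -- key pointwise Cauchy–Schwarz estimate
  have key : ∀ a : Fin d → ℤ,
      (max ‖emb d a‖ 1) ^ (2*p) * ‖∑ b ∈ S, M a b * z b‖ ^ 2
        ≤ (∑ b ∈ S, K a b) * (∑ b ∈ S, K a b * (y b) ^ 2) := by
    intro a
    have h1 : ‖∑ b ∈ S, M a b * z b‖
        ≤ ∑ b ∈ S, ‖M a b‖ * ‖z b‖ := by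
      calc ‖∑ b ∈ S, M a b * z b‖ ≤ ∑ b ∈ S, ‖M a b * z b‖ :=
            norm_sum_le _ _
      _ = ∑ b ∈ S, ‖M a b‖ * ‖z b‖ := by
            refine Finset.sum_congr rfl fun b _ => ?_
            exact norm_mul _ _
    have hKy : ∀ b, K a b * y b
        = (max ‖emb d a‖ 1) ^ p * (‖M a b‖ * ‖z b‖) := by
      intro b
      rw [hKdef, hydef]
      simp only []
      have hb0 : (max ‖emb d b‖ 1) ^ p ≠ 0 :=
        ne_of_gt (Real.rpow_pos_of_pos (hmpos b) p)
      field_simp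
    have hstep : (max ‖emb d a‖ 1) ^ p * ‖∑ b ∈ S, M a b * z b‖
        ≤ ∑ b ∈ S, K a b * y b := by
      calc (max ‖emb d a‖ 1) ^ p * ‖∑ b ∈ S, M a b * z b‖
          ≤ (max ‖emb d a‖ 1) ^ p * ∑ b ∈ S, ‖M a b‖ * ‖z b‖ :=
            mul_le_mul_of_nonneg_left h1 (by positivity)
      _ = ∑ b ∈ S, (max ‖emb d a‖ 1) ^ p * (‖M a b‖ * ‖z b‖) :=
            Finset.mul_sum _ _ _
      _ = ∑ b ∈ S, K a b * y b := by
            refine Finset.sum_congr rfl fun b _ => (hKy b).symm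
    calc (max ‖emb d a‖ 1) ^ (2*p) * ‖∑ b ∈ S, M a b * z b‖ ^ 2
        = ((max ‖emb d a‖ 1) ^ p * ‖∑ b ∈ S, M a b * z b‖) ^ 2 := by
          rw [mul_pow, hsq a]
    _ ≤ (∑ b ∈ S, K a b * y b) ^ 2 := by
          apply pow_le_pow_left₀ (by positivity) hstep
    _ ≤ (∑ b ∈ S, K a b) * (∑ b ∈ S, K a b * (y b) ^ 2) :=
          aux_cs S (K a) y (fun b _ => hK0 a b)
  -- main estimate
  have main : (∑' a : Fin d → ℤ,
      (max ‖emb d a‖ 1) ^ (2*p) * ‖∑ b ∈ S, M a b * z b‖ ^ 2) ≤ B * (B * T₂) := by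
    set g : (Fin d → ℤ) → ℝ := fun a =>
      (max ‖emb d a‖ 1) ^ (2*p) * ‖∑ b ∈ S, M a b * z b‖ ^ 2 with hgdef
    have hg0 : ∀ a, 0 ≤ g a := fun a => by rw [hgdef]; positivity
    by_cases hsumm : Summable g
    · have hofReal : ENNReal.ofReal (∑' a, g a) = ∑' a, ENNReal.ofReal (g a) :=
        ENNReal.ofReal_tsum_of_nonneg hg0 hsumm
      set Y : (Fin d → ℤ) → ℝ≥0∞ := fun b =>
        ENNReal.ofReal ((max ‖emb d b‖ 1) ^ (2*p) * ‖z b‖ ^ 2) with hYdef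
      have hENN : ∑' a, ENNReal.ofReal (g a) ≤ ENNReal.ofReal (B * (B * T₂)) := by
        calc ∑' a, ENNReal.ofReal (g a)
            ≤ ∑' a : Fin d → ℤ,
                ENNReal.ofReal B * ∑ b ∈ S, ENNReal.ofReal (K a b) * Y b := by
              apply ENNReal.tsum_le_tsum
              intro a
              calc ENNReal.ofReal (g a)
                  ≤ ENNReal.ofReal ((∑ b ∈ S, K a b) * (∑ b ∈ S, K a b * (y b) ^ 2)) :=
                    ENNReal.ofReal_le_ofReal (key a)
              _ = (∑ b ∈ S, ENNReal.ofReal (K a b)) *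
                    ∑ b ∈ S, ENNReal.ofReal (K a b * (y b) ^ 2) := by
                  rw [ENNReal.ofReal_mul (Finset.sum_nonneg fun b _ => hK0 a b),
                    ENNReal.ofReal_sum_of_nonneg (fun b _ => hK0 a b),
                    ENNReal.ofReal_sum_of_nonneg
                      (fun b _ => mul_nonneg (hK0 a b) (sq_nonneg _))]
              _ ≤ ENNReal.ofReal B * ∑ b ∈ S, ENNReal.ofReal (K a b * (y b) ^ 2) :=
                  mul_le_mul_left ((ENNReal.sum_le_tsum S).trans (hrow a)) _
              _ = ENNReal.ofReal B * ∑ b ∈ S, ENNReal.ofReal (K a b) * Y b := by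
                  congr 1
                  refine Finset.sum_congr rfl fun b _ => ?_
                  rw [ENNReal.ofReal_mul (hK0 a b), hy2 b, hYdef]
        _ = ENNReal.ofReal B *
              ∑' a : Fin d → ℤ, ∑ b ∈ S, ENNReal.ofReal (K a b) * Y b :=
            ENNReal.tsum_mul_left
        _ = ENNReal.ofReal B *
              ∑ b ∈ S, ∑' a : Fin d → ℤ, ENNReal.ofReal (K a b) * Y b := by
            rw [Summable.tsum_finsetSum (fun b _ => ENNReal.summable)]
        _ = ENNReal.ofReal B *
              ∑ b ∈ S, (∑' a : Fin d → ℤ, ENNReal.ofReal (K a b)) * Y b := by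
            congr 1
            exact Finset.sum_congr rfl fun b _ => ENNReal.tsum_mul_right
        _ ≤ ENNReal.ofReal B * ∑ b ∈ S, ENNReal.ofReal B * Y b := by
            apply mul_le_mul_right
            exact Finset.sum_le_sum fun b _ => mul_le_mul_left (hcol b) _
        _ = ENNReal.ofReal B * (ENNReal.ofReal B * ∑ b ∈ S, Y b) := by
            congr 1
            exact (Finset.mul_sum _ _ _).symm
        _ = ENNReal.ofReal (B * (B * T₂)) := by
            rw [hYdef]
            rw [← ENNReal.ofReal_sum_of_nonneg (fun b _ => by positivity)]
            rw [← hT₂def, ← ENNReal.ofReal_mul hB0, ← ENNReal.ofReal_mul hB0]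
      have := hofReal ▸ hENN
      exact (ENNReal.ofReal_le_ofReal_iff (by positivity)).mp this
    · rw [tsum_eq_zero_of_not_summable hsumm]
      positivity
  -- conclusion
  rw [hT2rw]
  calc Real.sqrt (∑' a : Fin d → ℤ,
        (max ‖emb d a‖ 1) ^ (2*p) * ‖∑ b ∈ S, M a b * z b‖ ^ 2)
      ≤ Real.sqrt (B * (B * T₂)) := Real.sqrt_le_sqrt main
  _ = B * Real.sqrt T₂ := by
      rw [show B * (B * T₂) = B^2 * T₂ by ring, Real.sqrt_mul (sq_nonneg B),
        Real.sqrt_sq hB0]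
  _ = (4*(n:ℝ))^n * (24*(d:ℝ))^d * C₀ * γ ^ (-((d:ℝ) + p)) * Real.exp (-γ * Δ / 2) *
        Real.sqrt T₂ := by rw [hBdef]
end
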